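/- Assume W·B·W = B. Then for every δ with 0 < δ ≤ r₀/2, every ε with 0 < ε ≤ δ/4, and every h ∈ U_ε, one has ∫_{Ω_{δ−2ε,B}} φ_ε(g⁻¹hΓ') dm(g) ≤ |sΓt⁻¹ ∩ Ω_{δ,B}| ≤ ∫_{Ω_{δ+2ε,B}} φ_ε(g⁻¹hΓ') dm(g). -/

import Mathlib

open MeasureTheory Set Pointwise

set_option maxHeartbeats 2000000 in
/-- Lemma `comparison`.  With `U_ε = O_ε × W`,
`χ_ε = 1_{U_ε}/m(U_ε)` and `φ_ε(h) = ∑_{γ ∈ sΓt⁻¹} χ_ε(hγ)`, assuming `W·B·W = B`: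
for every `0 < δ ≤ r₀/2`, `0 < ε ≤ δ/4` and `h ∈ U_ε`,
`∫_{Ω_{δ-2ε,B}} φ_ε(g⁻¹h) dm(g) ≤ |sΓt⁻¹ ∩ Ω_{δ,B}| ≤ ∫_{Ω_{δ+2ε,B}} φ_ε(g⁻¹h) dm(g)`. -/
theorem stmt1
    {Ginf Gf : Type*}
    [Group Ginf] [TopologicalSpace Ginf] [IsTopologicalGroup Ginf]
    [LocallyCompactSpace Ginf] [SecondCountableTopology Ginf]
    [MeasurableSpace Ginf] [BorelSpace Ginf]
    [Group Gf] [TopologicalSpace Gf] [IsTopologicalGroup Gf]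
    [LocallyCompactSpace Gf] [SecondCountableTopology Gf]
    [TotallyDisconnectedSpace Gf]
    [MeasurableSpace Gf] [BorelSpace Gf]
    (minf : Measure Ginf) [Measure.IsHaarMeasure minf]
    (mf : Measure Gf) [Measure.IsHaarMeasure mf]
    (hunimod : (minf.prod mf).IsMulRightInvariant)
    (r₀ : ℝ) (hr₀ : 0 < r₀) (d : ℝ) (hd : 0 < d)
    (p : ℝ → ℝ) (L : NNReal) (hp : LipschitzOnWith L p (Icc 0 r₀))
    (hppos : ∀ r ∈ Icc (0:ℝ) r₀, 0 < p r)
    (O : ℝ → Set Ginf)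
    (hOmeas : ∀ r ∈ Ioc (0:ℝ) r₀, MeasurableSet (O r))
    (hOsymm : ∀ r ∈ Ioc (0:ℝ) r₀, (O r)⁻¹ = O r)
    (hObdd : ∀ r ∈ Ioc (0:ℝ) r₀, IsCompact (closure (O r)))
    (hOnhd : ∀ r ∈ Ioc (0:ℝ) r₀, O r ∈ nhds (1 : Ginf))
    (hOprod : ∀ r r' : ℝ, 0 < r → 0 < r' → r + r' ≤ r₀ → O r * O r' = O (r + r'))
    (hOvol : ∀ r ∈ Ioc (0:ℝ) r₀, minf (O r) = ENNReal.ofReal (r ^ d * p r))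
    -- the lattice `Γ` and the conjugating elements `s`, `t`
    (Γ : Subgroup (Ginf × Gf)) (hΓdisc : DiscreteTopology Γ)
    (F : Set (Ginf × Gf)) (hFmeas : MeasurableSet F)
    (hFfund : ∀ g : Ginf × Gf, ∃! γ : Γ, g * (γ : Ginf × Gf) ∈ F)
    (hFfin : (minf.prod mf) F < ⊤)
    (s t : Ginf × Gf)
    -- the compact open subgroup `W` and the set `B`
    (W : Subgroup Gf) (hWcomp : IsCompact (W : Set Gf)) (hWopen : IsOpen (W : Set Gf))
    (B : Set Gf) (hBmeas : MeasurableSet B) (hB0 : 0 < mf B) (hBfin : mf B < ⊤)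
    (hWBW : (W : Set Gf) * B * (W : Set Gf) = B) :
    ∀ δ : ℝ, 0 < δ → δ ≤ r₀ / 2 → ∀ ε : ℝ, 0 < ε → ε ≤ δ / 4 →
      ∀ h ∈ (O ε) ×ˢ (W : Set Gf),
        (∫ g in (O (δ - 2*ε)) ×ˢ B,
            (∑' γ : ((fun γ : Ginf × Gf => s * γ * t⁻¹) '' (Γ : Set (Ginf × Gf))),
              Set.indicator ((O ε) ×ˢ (W : Set Gf))
                (fun _ => (((minf.prod mf) ((O ε) ×ˢ (W : Set Gf))).toReal)⁻¹)
                (g⁻¹ * h * γ)) ∂(minf.prod mf))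
          ≤ (((fun γ : Ginf × Gf => s * γ * t⁻¹) '' (Γ : Set (Ginf × Gf))
                ∩ (O δ) ×ˢ B).ncard : ℝ) ∧
        (((fun γ : Ginf × Gf => s * γ * t⁻¹) '' (Γ : Set (Ginf × Gf))
              ∩ (O δ) ×ˢ B).ncard : ℝ)
          ≤ ∫ g in (O (δ + 2*ε)) ×ˢ B,
            (∑' γ : ((fun γ : Ginf × Gf => s * γ * t⁻¹) '' (Γ : Set (Ginf × Gf))),
              Set.indicator ((O ε) ×ˢ (W : Set Gf))
                (fun _ => (((minf.prod mf) ((O ε) ×ˢ (W : Set Gf))).toReal)⁻¹)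
                (g⁻¹ * h * γ)) ∂(minf.prod mf) := by
  intro δ hδ0 hδr ε hε0 hεδ h hh
  set m : Measure (Ginf × Gf) := minf.prod mf with hm
  set U : Set (Ginf × Gf) := (O ε) ×ˢ (W : Set Gf) with hUdef
  set Λ : Set (Ginf × Gf) := (fun γ : Ginf × Gf => s * γ * t⁻¹) '' (Γ : Set (Ginf × Gf)) with hΛdef
  set c : ℝ := ((m U).toReal)⁻¹ with hcdef
  have hεI : ε ∈ Ioc (0:ℝ) r₀ := ⟨hε0, by linarith⟩
  have hr₀I : r₀ ∈ Ioc (0:ℝ) r₀ := ⟨hr₀, le_rfl⟩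
  -- products of O's
  have hstep : ∀ a b e : ℝ, 0 < a → 0 < b → 0 < e → a + b + e ≤ r₀ →
      ∀ x ∈ O a, ∀ y ∈ O b, ∀ z ∈ O e, x * y * z ∈ O (a + b + e) := by
    intro a b e ha hb he habe x hx y hy z hz
    have h1 : O a * O b = O (a + b) := hOprod a b ha hb (by linarith)
    have h2 : O (a + b) * O e = O (a + b + e) := hOprod _ _ (by linarith) he (by linarith)
    rw [← h2, ← h1]
    exact Set.mul_mem_mul (Set.mul_mem_mul hx hy) hz
  have hOmono : ∀ a b : ℝ, 0 < a → a ≤ b → b ≤ r₀ → O a ⊆ O b := by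
    intro a b ha hab hb x hx
    rcases eq_or_lt_of_le hab with rfl | hlt
    · exact hx
    · have h1 : (1 : Ginf) ∈ O (b - a) := mem_of_mem_nhds (hOnhd _ ⟨by linarith, by linarith⟩)
      have h2 : O a * O (b - a) = O (a + (b - a)) := hOprod _ _ ha (by linarith) (by linarith)
      have h3 : x * 1 ∈ O (a + (b - a)) := h2 ▸ Set.mul_mem_mul hx h1
      have he : a + (b - a) = b := by ring
      rw [he] at h3; simpa using h3
  -- symmetry of U
  have hUinv : ∀ u : Ginf × Gf, u ∈ U → u⁻¹ ∈ U := by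
    intro u hu
    refine ⟨?_, ?_⟩
    · show u.1⁻¹ ∈ O ε
      rw [← hOsymm ε hεI]
      exact Set.mem_inv.mpr (by simpa using hu.1)
    · show u.2⁻¹ ∈ (W : Set Gf)
      exact inv_mem hu.2
  have hhinv : h⁻¹ ∈ U := hUinv h hh
  -- measure facts about U
  have hUmeas : MeasurableSet U := (hOmeas ε hεI).prod hWopen.measurableSet
  have hUvol : m U = minf (O ε) * mf (W : Set Gf) := Measure.prod_prod _ _
  have hOεpos : 0 < minf (O ε) := by
    rw [hOvol ε hεI]
    exact ENNReal.ofReal_pos.mpr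
      (mul_pos (Real.rpow_pos_of_pos hε0 d) (hppos ε ⟨le_of_lt hε0, hεI.2⟩))
  have hOεne : minf (O ε) ≠ ⊤ := by rw [hOvol ε hεI]; exact ENNReal.ofReal_ne_top
  have hWpos : 0 < mf (W : Set Gf) := hWopen.measure_pos mf ⟨1, W.one_mem⟩
  have hWne : mf (W : Set Gf) ≠ ⊤ := hWcomp.measure_lt_top.ne
  have hUpos : 0 < m U := by rw [hUvol]; exact ENNReal.mul_pos hOεpos.ne' hWpos.ne'
  have hUne : m U ≠ ⊤ := by rw [hUvol]; exact ENNReal.mul_ne_top hOεne hWne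
  have hUtR : 0 < (m U).toReal := ENNReal.toReal_pos hUpos.ne' hUne
  have hc0 : 0 ≤ c := by rw [hcdef]; positivity
  -- the translated sets T x
  set T : Ginf × Gf → Set (Ginf × Gf) := fun x => (fun g => (h * x)⁻¹ * g) ⁻¹' U with hTdef
  have hTmeas : ∀ x, MeasurableSet (T x) := fun x => hUmeas.preimage (measurable_const_mul _)
  have hTvol : ∀ x, m (T x) = m U := fun x => measure_preimage_mul m _ U
  have hTmem : ∀ x g : Ginf × Gf, g ∈ T x ↔ g⁻¹ * h * x ∈ U := by
    intro x g
    constructor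
    · intro hg
      have h1 := hUinv _ hg
      have e : ((h * x)⁻¹ * g)⁻¹ = g⁻¹ * h * x := by group
      rwa [e] at h1
    · intro hg
      have h1 := hUinv _ hg
      have e : (g⁻¹ * h * x)⁻¹ = (h * x)⁻¹ * g := by group
      rwa [e] at h1
  have hind : ∀ (x g : Ginf × Gf),
      Set.indicator U (fun _ => c) (g⁻¹ * h * x) = Set.indicator (T x) (fun _ => c) g := by
    intro x g
    by_cases hg : g ∈ T x
    · rw [Set.indicator_of_mem hg, Set.indicator_of_mem ((hTmem x g).mp hg)]
    · rw [Set.indicator_of_notMem hg,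
        Set.indicator_of_notMem (fun hmem => hg ((hTmem x g).mpr hmem))]
  -- support localization
  have hBW : B * (W : Set Gf) ⊆ B := by
    intro z hz
    rcases hz with ⟨b, hb, w, hw, rfl⟩
    have h1 : (1 : Gf) * b * w ∈ (W : Set Gf) * B * (W : Set Gf) :=
      Set.mul_mem_mul (Set.mul_mem_mul W.one_mem hb) hw
    rw [hWBW] at h1; simpa using h1
  have hmove : ∀ a b : ℝ, 0 < b → a = ε + b + ε → a ≤ r₀ →
      ∀ g ∈ (O b) ×ˢ B, ∀ x : Ginf × Gf, g⁻¹ * h * x ∈ U → x ∈ (O a) ×ˢ B := by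
    intro a b hb hab har g hg x hu
    have hxe : x = h⁻¹ * g * (g⁻¹ * h * x) := by group
    refine ⟨?_, ?_⟩
    · show x.1 ∈ O a
      rw [hab]
      have := hstep ε b ε hε0 hb hε0 (by linarith) _ hhinv.1 _ hg.1 _ hu.1
      rw [hxe]; exact this
    · show x.2 ∈ B
      have h2 : (h⁻¹).2 * g.2 * (g⁻¹ * h * x).2 ∈ (W : Set Gf) * B * (W : Set Gf) :=
        Set.mul_mem_mul (Set.mul_mem_mul hhinv.2 hg.2) hu.2
      rw [hWBW] at h2
      rw [hxe]; exact h2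
  have hTsub : ∀ x : Ginf × Gf, x ∈ (O δ) ×ˢ B → T x ⊆ (O (δ + 2*ε)) ×ˢ B := by
    intro x hx g hg
    have hv : (h * x)⁻¹ * g ∈ U := hg
    have hge : g = h * x * ((h * x)⁻¹ * g) := by group
    refine ⟨?_, ?_⟩
    · show g.1 ∈ O (δ + 2*ε)
      have := hstep ε δ ε hε0 hδ0 hε0 (by linarith) _ hh.1 _ hx.1 _ hv.1
      have he : ε + δ + ε = δ + 2*ε := by ring
      rw [he] at this
      rw [hge]; exact this
    · show g.2 ∈ B
      have h2 : h.2 * x.2 * ((h * x)⁻¹ * g).2 ∈ (W : Set Gf) * B * (W : Set Gf) :=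
        Set.mul_mem_mul (Set.mul_mem_mul hh.2 hx.2) hv.2
      rw [hWBW] at h2
      rw [hge]; exact h2
  -- finiteness of Λ ∩ (O r₀ ×ˢ B)
  have hSfin : (Λ ∩ (O r₀) ×ˢ B).Finite := by
    obtain ⟨Uo, hUoOpen, hUo1, hUosep⟩ :
        ∃ Uo : Set (Ginf × Gf), IsOpen Uo ∧ (1 : Ginf × Gf) ∈ Uo ∧
          ∀ γ ∈ (Γ : Set (Ginf × Gf)), γ ∈ Uo → γ = 1 := by
      have hop : IsOpen ({1} : Set Γ) := isOpen_discrete _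
      rw [isOpen_induced_iff] at hop
      obtain ⟨Uo, hUo, hpre⟩ := hop
      refine ⟨Uo, hUo, ?_, ?_⟩
      · have : (1 : Γ) ∈ (Subtype.val ⁻¹' Uo : Set Γ) := by rw [hpre]; rfl
        exact this
      · intro γ hγ hγU
        have : (⟨γ, hγ⟩ : Γ) ∈ (Subtype.val ⁻¹' Uo : Set Γ) := hγU
        rw [hpre] at this
        exact congrArg Subtype.val this
    set N : Set (Ginf × Gf) := (fun x => t⁻¹ * x * t) ⁻¹' Uo with hNdef
    have hNopen : IsOpen N := hUoOpen.preimage ((continuous_mul_left t⁻¹).mul continuous_const)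
    have hN1 : (1 : Ginf × Gf) ∈ N := by
      show t⁻¹ * 1 * t ∈ Uo
      simpa using hUo1
    obtain ⟨V, hVnhd, hVclosed, hVsymm, hVmul⟩ :=
      exists_closed_nhds_one_inv_eq_mul_subset (hNopen.mem_nhds hN1)
    set V' : Set (Ginf × Gf) := V ∩ ((O r₀) ×ˢ (W : Set Gf)) with hV'def
    have hV'meas : MeasurableSet V' :=
      hVclosed.measurableSet.inter ((hOmeas r₀ hr₀I).prod hWopen.measurableSet)
    have hV'nhd : V' ∈ nhds (1 : Ginf × Gf) := by
      refine Filter.inter_mem hVnhd ?_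
      exact prod_mem_nhds (hOnhd r₀ hr₀I) (hWopen.mem_nhds W.one_mem)
    have hV'pos : 0 < m V' :=
      m.measure_pos_of_nonempty_interior ⟨1, mem_interior_iff_mem_nhds.mpr hV'nhd⟩
    set As : ↥(Λ ∩ (O r₀) ×ˢ B) → Set (Ginf × Gf) :=
      fun x => (fun g => (↑x : Ginf × Gf)⁻¹ * g) ⁻¹' V' with hAsdef
    have hAsmeas : ∀ x, MeasurableSet (As x) :=
      fun x => hV'meas.preimage (measurable_const_mul _)
    have hAsvol : ∀ x, m (As x) = m V' := fun x => measure_preimage_mul m _ V'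
    have hAsdisj : Pairwise (Function.onFun Disjoint As) := by
      intro x y hxy
      refine Set.disjoint_left.mpr ?_
      intro g hgx hgy
      have hx' : (↑x : Ginf × Gf)⁻¹ * g ∈ V := hgx.1
      have hy' : (↑y : Ginf × Gf)⁻¹ * g ∈ V := hgy.1
      have hgx2 : g⁻¹ * (↑x : Ginf × Gf) ∈ V := by
        rw [← hVsymm]
        refine Set.mem_inv.mpr ?_
        have e : (g⁻¹ * (↑x : Ginf × Gf))⁻¹ = (↑x : Ginf × Gf)⁻¹ * g := by group
        rw [e]; exact hx'
      have hyx : ((↑y : Ginf × Gf)⁻¹ * g) * (g⁻¹ * (↑x : Ginf × Gf)) ∈ V * V :=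
        Set.mul_mem_mul hy' hgx2
      have e2 : ((↑y : Ginf × Gf)⁻¹ * g) * (g⁻¹ * (↑x : Ginf × Gf))
          = (↑y : Ginf × Gf)⁻¹ * (↑x : Ginf × Gf) := by group
      rw [e2] at hyx
      have hyxN : (↑y : Ginf × Gf)⁻¹ * (↑x : Ginf × Gf) ∈ N := hVmul hyx
      obtain ⟨γ₁, hγ₁, hγ₁e⟩ := x.2.1
      obtain ⟨γ₂, hγ₂, hγ₂e⟩ := y.2.1
      rw [← hγ₁e, ← hγ₂e] at hyxN
      have e3 : (s * γ₂ * t⁻¹)⁻¹ * (s * γ₁ * t⁻¹) = t * (γ₂⁻¹ * γ₁) * t⁻¹ := by group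
      rw [e3] at hyxN
      have e4 : t⁻¹ * (t * (γ₂⁻¹ * γ₁) * t⁻¹) * t = γ₂⁻¹ * γ₁ := by group
      have hmem : γ₂⁻¹ * γ₁ ∈ Uo := by
        have h5 : t⁻¹ * (t * (γ₂⁻¹ * γ₁) * t⁻¹) * t ∈ Uo := hyxN
        rwa [e4] at h5
      have h6 : γ₂⁻¹ * γ₁ = 1 :=
        hUosep _ (mul_mem (inv_mem hγ₂) hγ₁) hmem
      have h7 : γ₂ = γ₁ := inv_mul_eq_one.mp h6
      exact hxy (Subtype.ext (by rw [← hγ₁e, ← hγ₂e, h7]))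
    -- the union has finite measure
    have hKcomp : IsCompact (closure (O r₀) * closure (O r₀)) :=
      (hObdd r₀ hr₀I).mul (hObdd r₀ hr₀I)
    have hUnion : (⋃ x, As x) ⊆ (closure (O r₀) * closure (O r₀)) ×ˢ B := by
      intro g hg
      obtain ⟨x, hgx⟩ := Set.mem_iUnion.mp hg
      have hv : (↑x : Ginf × Gf)⁻¹ * g ∈ V' := hgx
      have hge : g = (↑x : Ginf × Gf) * ((↑x : Ginf × Gf)⁻¹ * g) := by group
      have hx1 : (↑x : Ginf × Gf).1 ∈ O r₀ := x.2.2.1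
      have hx2 : (↑x : Ginf × Gf).2 ∈ B := x.2.2.2
      refine ⟨?_, ?_⟩
      · show g.1 ∈ closure (O r₀) * closure (O r₀)
        have := Set.mul_mem_mul (subset_closure hx1) (subset_closure hv.2.1)
        rw [hge]; exact this
      · show g.2 ∈ B
        have := hBW (Set.mul_mem_mul hx2 hv.2.2)
        rw [hge]; exact this
    have hUnionFin : m (⋃ x, As x) ≠ ⊤ := by
      refine ne_top_of_le_ne_top ?_ (measure_mono hUnion)
      rw [hm, Measure.prod_prod]
      exact ENNReal.mul_ne_top hKcomp.measure_lt_top.ne hBfin.ne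
    have hfin := Measure.finite_const_le_meas_of_disjoint_iUnion m hV'pos hAsmeas hAsdisj hUnionFin
    have huniv : {x : ↥(Λ ∩ (O r₀) ×ˢ B) | m V' ≤ m (As x)} = Set.univ :=
      Set.eq_univ_of_forall (fun x => by show m V' ≤ m (As x); rw [hAsvol x])
    rw [huniv, Set.finite_univ_iff] at hfin
    haveI := hfin
    exact Set.toFinite _
  -- finite index sets
  have hAfin : ∀ a : ℝ, 0 < a → a ≤ r₀ →
      ((Subtype.val ⁻¹' ((O a) ×ˢ B)) : Set ↥Λ).Finite := by
    intro a ha har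
    have hsub : ((Subtype.val ⁻¹' ((O a) ×ˢ B)) : Set ↥Λ)
        ⊆ Subtype.val ⁻¹' (Λ ∩ (O r₀) ×ˢ B) := by
      intro x hx
      exact ⟨x.2, ⟨hOmono a r₀ ha har le_rfl hx.1, hx.2⟩⟩
    exact ((hSfin.preimage (Subtype.coe_injective.injOn)).subset hsub)
  have hδI : 0 < δ ∧ δ ≤ r₀ := ⟨hδ0, by linarith⟩
  have hfinδ := hAfin δ hδ0 (by linarith)
  have hfin4 := hAfin (δ + 4*ε) (by linarith) (by linarith)
  -- the key integral computation
  have key : ∀ a b : ℝ, 0 < b → a = ε + b + ε → a ≤ r₀ →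
      ∀ (hfin : ((Subtype.val ⁻¹' ((O a) ×ˢ B)) : Set ↥Λ).Finite),
      (∫ g in (O b) ×ˢ B, (∑' x : ↥Λ, Set.indicator U (fun _ => c) (g⁻¹ * h * ↑x)) ∂m)
        = ∑ x ∈ hfin.toFinset, ((m (((O b) ×ˢ B) ∩ T ↑x)).toReal * c) := by
    intro a b hb hab har hfin
    have hbI : b ∈ Ioc (0:ℝ) r₀ := ⟨hb, by linarith⟩
    have hΩmeas : MeasurableSet ((O b) ×ˢ B) := (hOmeas b hbI).prod hBmeas
    have hΩfin : m ((O b) ×ˢ B) < ⊤ := by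
      rw [hm, Measure.prod_prod]
      exact ENNReal.mul_lt_top (by rw [hOvol b hbI]; exact ENNReal.ofReal_lt_top) hBfin
    have e1 : (∫ g in (O b) ×ˢ B, (∑' x : ↥Λ, Set.indicator U (fun _ => c) (g⁻¹ * h * ↑x)) ∂m)
        = ∫ g in (O b) ×ˢ B,
            (∑ x ∈ hfin.toFinset, Set.indicator (T ↑x) (fun _ => c) g) ∂m := by
      refine setIntegral_congr_fun hΩmeas ?_
      intro g hg
      have e2 : (∑' x : ↥Λ, Set.indicator U (fun _ => c) (g⁻¹ * h * ↑x))
          = ∑ x ∈ hfin.toFinset, Set.indicator U (fun _ => c) (g⁻¹ * h * ↑x) := by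
        refine tsum_eq_sum ?_
        intro x hx
        refine Set.indicator_of_notMem ?_ _
        intro hmem
        exact hx (hfin.mem_toFinset.mpr (hmove a b hb hab har g hg ↑x hmem))
      exact e2.trans (Finset.sum_congr rfl (fun x _ => hind ↑x g))
    rw [e1]
    haveI : IsFiniteMeasure (m.restrict ((O b) ×ˢ B)) := by
      constructor
      rw [Measure.restrict_apply_univ]
      exact hΩfin
    rw [integral_finset_sum]
    · refine Finset.sum_congr rfl (fun x _ => ?_)
      rw [setIntegral_indicator (hTmeas ↑x), setIntegral_const, smul_eq_mul]; rfl
    · intro x _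
      exact (integrable_const c).indicator (hTmeas ↑x)
  -- relating the Finset to the ncard
  have hcard : (Λ ∩ (O δ) ×ˢ B).ncard = hfinδ.toFinset.card := by
    have h1 : Λ ∩ (O δ) ×ˢ B = Subtype.val '' ((Subtype.val ⁻¹' ((O δ) ×ˢ B)) : Set ↥Λ) := by
      rw [Subtype.image_preimage_coe, Set.inter_comm]
    rw [h1, Set.ncard_image_of_injective _ Subtype.coe_injective,
      Set.ncard_eq_toFinset_card _ hfinδ]
  -- the two bounds
  have hδmI : δ - 2*ε ∈ Ioc (0:ℝ) r₀ := ⟨by linarith, by linarith⟩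
  have hδpI : δ + 2*ε ∈ Ioc (0:ℝ) r₀ := ⟨by linarith, by linarith⟩
  constructor
  · -- upper bound for the left integral
    rw [key δ (δ - 2*ε) (by linarith) (by ring) (by linarith) hfinδ]
    rw [hcard]
    calc ∑ x ∈ hfinδ.toFinset, ((m (((O (δ - 2*ε)) ×ˢ B) ∩ T ↑x)).toReal * c)
        ≤ ∑ x ∈ hfinδ.toFinset, (1:ℝ) := by
          refine Finset.sum_le_sum (fun x _ => ?_)
          have h1 : m (((O (δ - 2*ε)) ×ˢ B) ∩ T ↑x) ≤ m U := by
            rw [← hTvol ↑x]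
            exact measure_mono Set.inter_subset_right
          have h2 : (m (((O (δ - 2*ε)) ×ˢ B) ∩ T ↑x)).toReal ≤ (m U).toReal :=
            ENNReal.toReal_mono hUne h1
          calc (m (((O (δ - 2*ε)) ×ˢ B) ∩ T ↑x)).toReal * c
              ≤ (m U).toReal * c := mul_le_mul_of_nonneg_right h2 hc0
            _ = 1 := by rw [hcdef]; exact mul_inv_cancel₀ hUtR.ne'
      _ = (hfinδ.toFinset.card : ℝ) := by simp
  · -- lower bound for the right integral
    rw [key (δ + 4*ε) (δ + 2*ε) (by linarith) (by ring) (by linarith) hfin4]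
    rw [hcard]
    have hsub : hfinδ.toFinset ⊆ hfin4.toFinset := by
      intro x hx
      rw [Set.Finite.mem_toFinset] at hx ⊢
      exact ⟨hOmono δ (δ + 4*ε) hδ0 (by linarith) (by linarith) hx.1, hx.2⟩
    calc (hfinδ.toFinset.card : ℝ)
        = ∑ x ∈ hfinδ.toFinset, (1:ℝ) := by simp
      _ = ∑ x ∈ hfinδ.toFinset, ((m (((O (δ + 2*ε)) ×ˢ B) ∩ T ↑x)).toReal * c) := by
          refine Finset.sum_congr rfl (fun x hx => ?_)
          rw [Set.Finite.mem_toFinset] at hx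
          have h1 : T ↑x ⊆ (O (δ + 2*ε)) ×ˢ B := hTsub ↑x hx
          rw [Set.inter_eq_right.mpr h1, hTvol ↑x, hcdef, mul_inv_cancel₀ hUtR.ne']
      _ ≤ ∑ x ∈ hfin4.toFinset, ((m (((O (δ + 2*ε)) ×ˢ B) ∩ T ↑x)).toReal * c) := by
          refine Finset.sum_le_sum_of_subset_of_nonneg hsub (fun x _ _ => ?_)
          positivity
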